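/- The entropy of the stationary representation of the killed chain equals h(𝕐^{(𝒦)}) = -∑_{i∈I} μ(i) P(i,ℰ) log P(i,ℰ) - (1-γ) ∑_{j∈I} μ(j) log μ(j) - ∑_{i,j∈I} μ(i) P(i,j) log P(i,j). -/

import Mathlib

open Finset Matrix Real

lemma nml_mul' (x y : ℝ) (hx : 0 ≤ x) (hy : 0 ≤ y) :
    Real.negMulLog (x * y) = y * Real.negMulLog x + x * Real.negMulLog y := by
  rcases hx.eq_or_lt with h | h
  · simp [← h, Real.negMulLog]
  rcases hy.eq_or_lt with h' | h'
  · simp [← h', Real.negMulLog]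
  simp only [Real.negMulLog, Real.log_mul h.ne' h'.ne']
  ring

/-- The entropy of the stationary representation of the killed chain equals
h(𝕐^{(𝒦)}) = -∑_i μ(i)P(i,ℰ)log P(i,ℰ) - (1-γ)∑_j μ(j)log μ(j) - ∑_{i,j} μ(i)P(i,j)log P(i,j),
with 0 log 0 = 0 (via negMulLog). -/
theorem killed_entropy_formula {I E : Type*} [Fintype I] [Fintype E]
    [DecidableEq I] [DecidableEq E] [Nonempty I] [Nonempty E]
    (P : Matrix (I ⊕ E) (I ⊕ E) ℝ)
    (hP0 : ∀ a b, 0 ≤ P a b)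
    (hP1 : ∀ a, ∑ b, P a b = 1)
    (habs : ∀ (ε : E) (b : I ⊕ E), P (Sum.inr ε) b = if b = Sum.inr ε then 1 else 0)
    (hirr : ∀ i j : I, ∃ n : ℕ, 0 < ((P.submatrix Sum.inl Sum.inl) ^ n) i j)
    (hsub : 0 < ∑ i : I, ∑ ε : E, P (Sum.inl i) (Sum.inr ε))
    (μ : I → ℝ) (hμ0 : ∀ i, 0 ≤ μ i) (hμ1 : ∑ i, μ i = 1)
    (γ : ℝ) (hγdef : γ = ∑ i : I, ∑ j : I, μ i * P (Sum.inl i) (Sum.inl j))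
    (hγ : 0 < γ ∧ γ < 1)
    (hqsd : μ ᵥ* (P.submatrix Sum.inl Sum.inl) = γ • μ)
    (K : I × I × Bool → I × I × Bool → ℝ)
    (hK : ∀ (i j l k : I) (a b : Bool),
      K (i, j, a) (l, k, b)
        = if l = j then
            (if b then P (Sum.inl j) (Sum.inl k)
             else (∑ ε : E, P (Sum.inl j) (Sum.inr ε)) * μ k)
          else 0)
    (ζ : I × I × Bool → ℝ)
    (hζ : ∀ (i j : I) (a : Bool),
      ζ (i, j, a)
        = if a then μ i * P (Sum.inl i) (Sum.inl j)
          else μ i * (∑ ε : E, P (Sum.inl i) (Sum.inr ε)) * μ j) :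
    (∑ x : I × I × Bool, ζ x * ∑ y : I × I × Bool, negMulLog (K x y))
      = (∑ i : I, μ i * negMulLog (∑ ε : E, P (Sum.inl i) (Sum.inr ε)))
        + (1 - γ) * (∑ j : I, negMulLog (μ j))
        + ∑ i : I, ∑ j : I, μ i * negMulLog (P (Sum.inl i) (Sum.inl j)) := by
  set q : I → ℝ := fun i => ∑ ε : E, P (Sum.inl i) (Sum.inr ε) with hqdef
  have hq0 : ∀ i, 0 ≤ q i := fun i => Finset.sum_nonneg fun ε _ => hP0 _ _
  -- inner sum
  have hinner : ∀ (i j : I) (a : Bool),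
      (∑ y : I × I × Bool, negMulLog (K (i, j, a) y))
        = negMulLog (q j) + q j * (∑ k, negMulLog (μ k))
            + ∑ k, negMulLog (P (Sum.inl j) (Sum.inl k)) := by
    intro i j a
    rw [Fintype.sum_prod_type]
    rw [Finset.sum_eq_single j (by intro l _ hl; simp [Fintype.sum_prod_type, hK, hl])
      (by simp)]
    simp only [Fintype.sum_prod_type, hK, if_pos rfl, Fintype.sum_bool, if_true,
      Bool.false_eq_true, if_false]
    have : ∀ k, negMulLog (q j * μ k)
        = μ k * negMulLog (q j) + q j * negMulLog (μ k) :=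
      fun k => nml_mul' _ _ (hq0 j) (hμ0 k)
    simp only [show ∀ k, negMulLog ((∑ ε, P (Sum.inl j) (Sum.inr ε)) * μ k) = _ from this]
    rw [Finset.sum_add_distrib, Finset.sum_add_distrib, ← Finset.sum_mul,
      ← Finset.mul_sum, hμ1]
    ring
  have hγμ : ∀ j, ∑ i, μ i * P (Sum.inl i) (Sum.inl j) = γ * μ j := by
    intro j
    have := congrFun hqsd j
    simpa [Matrix.vecMul, dotProduct, Matrix.submatrix] using this
  have hqsum : ∑ i, μ i * q i = 1 - γ := by
    have h1 : ∀ i : I, q i = 1 - ∑ j, P (Sum.inl i) (Sum.inl j) := by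
      intro i
      have := hP1 (Sum.inl i)
      rw [Fintype.sum_sum_type] at this
      linarith
    calc ∑ i, μ i * q i = ∑ i, (μ i - ∑ j, μ i * P (Sum.inl i) (Sum.inl j)) := by
          refine Finset.sum_congr rfl fun i _ => ?_
          rw [h1 i, ← Finset.mul_sum]; ring
      _ = 1 - γ := by
          rw [Finset.sum_sub_distrib, hμ1, hγdef]
  -- main computation
  have hmain : (∑ x : I × I × Bool, ζ x * ∑ y : I × I × Bool, negMulLog (K x y))
      = ∑ j, μ j * (negMulLog (q j) + q j * (∑ k, negMulLog (μ k))
          + ∑ k, negMulLog (P (Sum.inl j) (Sum.inl k))) := by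
    rw [Fintype.sum_prod_type]
    simp only [Fintype.sum_prod_type, Fintype.sum_bool, hinner, hζ, if_true,
      Bool.false_eq_true, if_false]
    rw [Finset.sum_comm]
    refine Finset.sum_congr rfl fun j _ => ?_
    rw [Finset.sum_add_distrib, ← Finset.sum_mul, ← Finset.sum_mul, hγμ j]
    have : ∑ i, μ i * q i * μ j = (1 - γ) * μ j := by
      rw [← Finset.sum_mul, hqsum]
    rw [this]
    ring
  rw [hmain]
  simp only [mul_add, Finset.sum_add_distrib]
  have h2 : ∑ j, μ j * (q j * ∑ k, negMulLog (μ k))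
      = (1 - γ) * ∑ j, negMulLog (μ j) := by
    have e : ∀ j, μ j * (q j * ∑ k, negMulLog (μ k))
        = μ j * q j * ∑ k, negMulLog (μ k) := fun j => by ring
    simp_rw [e]
    rw [← Finset.sum_mul, hqsum]
  rw [h2]
  simp_rw [Finset.mul_sum]
  rfl
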